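/- arXiv:1902.11186 — 2 statements merged into one kernel-verified Lean document; each statement's English description precedes it below -/
import Mathlib

section
/- Let S : Fin n_b → Fin m_f → Bool be a structure matrix with no zero columns, i.e., for every j : Fin m_f there exists i : Fin n_b with S i j = true. Then the following are equivalent: (1) there exists a family of row vectors q : Fin n_b → ((Fin p ⊕ Fin m_u) → K) such that for every i, (q i) ᵥ* G = 0, and for every pair (i,j) with S i j = true, (q i) ⬝ᵥ (Sum.elim (fun r => G_f r j) 0) ≠ 0 (the targeted entries of the structure matrix are achieved, with no constraint on the entries with S i j = false); (2) for every j : Fin m_f, the rank of the matrix obtained by appending the column (fun r => G_f r j) to G_d is strictly greater than rank G_d. (Algebraic core of Theorem 5: the soft approximate fault detection and isolation problem is solvable if and only if the exact fault detection problem is solvable, i.e., iff the system is completely fault detectable.) -/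
open Matrix

section Aux

variable {K : Type*} [Field K] {n : Type*} [Fintype n] [DecidableEq n]

/-- The linear functional `x ↦ w ⬝ᵥ x`. -/
def dotL (w : n → K) : (n → K) →ₗ[K] K where
  toFun x := w ⬝ᵥ x
  map_add' a b := dotProduct_add w a b
  map_smul' c x := by simp [dotProduct_smul]

@[simp] lemma dotL_apply (w x : n → K) : dotL w x = w ⬝ᵥ x := rfl

lemma notMem_span_cols_iff {m : Type*} [Fintype m] (G : Matrix n m K) (g : n → K) :
    g ∉ Submodule.span K (Set.range Gᵀ) ↔
      ∃ w : n → K, w ᵥ* G = 0 ∧ w ⬝ᵥ g ≠ 0 := by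
  constructor
  · intro hg
    obtain ⟨f, hf1, hf2⟩ := Submodule.exists_dual_map_eq_bot_of_notMem hg inferInstance
    have hsingle : ∀ i : n, (Pi.single i (1:K) : n → K) = fun j => if i = j then 1 else 0 := by
      intro i; funext j; simp [Pi.single_apply, eq_comm]
    refine ⟨fun i => f (Pi.single i 1), ?_, ?_⟩
    · have hW : ∀ v ∈ Submodule.span K (Set.range Gᵀ), f v = 0 := by
        intro v hv
        have : f v ∈ Submodule.map f (Submodule.span K (Set.range Gᵀ)) :=
          Submodule.mem_map_of_mem hv
        rw [hf2] at this
        simpa using this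
      funext j
      have hcol : (fun i => G i j) ∈ Submodule.span K (Set.range Gᵀ) :=
        Submodule.subset_span ⟨j, rfl⟩
      have : (fun i => f (Pi.single i 1)) ⬝ᵥ (fun i => G i j) = f (fun i => G i j) := by
        conv_rhs => rw [pi_eq_sum_univ (fun i => G i j)]
        rw [map_sum]
        simp [dotProduct, mul_comm, hsingle]
      show (fun i => f (Pi.single i 1)) ⬝ᵥ (fun i => G i j) = 0
      rw [this, hW _ hcol]
    · have : (fun i => f (Pi.single i 1)) ⬝ᵥ g = f g := by
        conv_rhs => rw [pi_eq_sum_univ g]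
        rw [map_sum]
        simp [dotProduct, mul_comm, hsingle]
      rw [this]
      exact hf1
  · rintro ⟨w, hw1, hw2⟩ hg
    have hker : Submodule.span K (Set.range Gᵀ) ≤ LinearMap.ker (dotL w) := by
      rw [Submodule.span_le]
      rintro v ⟨j, rfl⟩
      exact (congrFun hw1 j : w ⬝ᵥ Gᵀ j = 0)
    exact hw2 (hker hg)

lemma rank_append_col_gt_iff {m : Type*} [Fintype m] (G : Matrix n m K) (g : n → K) :
    (Matrix.fromCols G (Matrix.replicateCol (Fin 1) g)).rank > G.rank ↔
      g ∉ Submodule.span K (Set.range Gᵀ) := by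
  have hrange : Set.range (Matrix.fromCols G (Matrix.replicateCol (Fin 1) g))ᵀ
      = Set.range Gᵀ ∪ {g} := by
    ext v
    constructor
    · rintro ⟨j | j, rfl⟩
      · exact Or.inl ⟨j, rfl⟩
      · right
        ext i
        simp [Matrix.fromCols, Matrix.replicateCol]
    · rintro (⟨j, rfl⟩ | hv)
      · exact ⟨Sum.inl j, rfl⟩
      · refine ⟨Sum.inr 0, ?_⟩
        rw [Set.mem_singleton_iff] at hv
        subst hv
        ext i
        simp [Matrix.fromCols, Matrix.replicateCol]
  rw [Matrix.rank_eq_finrank_span_cols, Matrix.rank_eq_finrank_span_cols,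
    show Set.range (Matrix.fromCols G (Matrix.replicateCol (Fin 1) g)).col
      = Set.range Gᵀ ∪ {g} from hrange,
    show Set.range G.col = Set.range Gᵀ from rfl,
    Submodule.span_union]
  constructor
  · intro h hg
    have : Submodule.span K ({g} : Set (n → K)) ≤ Submodule.span K (Set.range Gᵀ) := by
      rw [Submodule.span_singleton_le_iff_mem]; exact hg
    rw [sup_eq_left.mpr this] at h
    exact lt_irrefl _ h
  · intro hg
    apply Submodule.finrank_lt_finrank_of_lt
    refine lt_of_le_of_ne le_sup_left ?_
    intro hEq
    apply hg
    rw [hEq]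
    exact Submodule.mem_sup_right (Submodule.mem_span_singleton_self g)

lemma exists_common_nonvanishing {V : Type*} [AddCommGroup V] [Module K V] [Infinite K]
    (W : Submodule K V) {ι : Type*} [Finite ι] (φ : ι → (V →ₗ[K] K))
    (h : ∀ j, ∃ w ∈ W, φ j w ≠ 0) :
    ∃ w ∈ W, ∀ j, φ j w ≠ 0 := by
  by_contra hcon
  push_neg at hcon
  set pj : ι → Subspace K W := fun j => LinearMap.ker ((φ j).comp W.subtype)
  have hcov : ⋃ j, (pj j : Set W) = Set.univ := by
    rw [Set.eq_univ_iff_forall]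
    intro x
    obtain ⟨j, hj⟩ := hcon x.1 x.2
    exact Set.mem_iUnion.mpr ⟨j, by simpa [pj, LinearMap.mem_ker] using hj⟩
  obtain ⟨j, hj⟩ := Subspace.exists_eq_top_of_iUnion_eq_univ hcov
  obtain ⟨w, hwW, hw⟩ := h j
  apply hw
  have : (⟨w, hwW⟩ : W) ∈ pj j := hj ▸ Submodule.mem_top
  simpa [pj, LinearMap.mem_ker] using this

end Aux

instance : Infinite (RatFunc ℝ) :=
  Infinite.of_injective _ (RatFunc.algebraMap_injective ℝ)

/-- Algebraic core of Theorem 5: for a structure matrix `S` without zero columns, the soft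
approximate fault detection and isolation problem is solvable if and only if the exact
fault detection problem is solvable (complete fault detectability). -/
theorem soft_afdip_solvable_iff_completely_fault_detectable
    (p m_u m_d m_f n_b : ℕ)
    (G_u : Matrix (Fin p) (Fin m_u) (RatFunc ℝ))
    (G_d : Matrix (Fin p) (Fin m_d) (RatFunc ℝ))
    (G_f : Matrix (Fin p) (Fin m_f) (RatFunc ℝ))
    (S : Fin n_b → Fin m_f → Bool)
    (hS : ∀ j : Fin m_f, ∃ i : Fin n_b, S i j = true) :
    (∃ q : Fin n_b → ((Fin p ⊕ Fin m_u) → RatFunc ℝ),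
        ∀ i : Fin n_b,
          (q i) ᵥ* (Matrix.fromBlocks G_u G_d 1 0) = 0 ∧
          (∀ j : Fin m_f, S i j = true →
            (q i) ⬝ᵥ (Sum.elim (fun r => G_f r j) 0) ≠ 0)) ↔
    (∀ j : Fin m_f,
        (Matrix.fromCols G_d (Matrix.replicateCol (Fin 1) (fun r => G_f r j))).rank
          > G_d.rank) := by
  have hdot : ∀ (a b : Fin p → RatFunc ℝ) (c d : Fin m_u → RatFunc ℝ),
      Sum.elim a c ⬝ᵥ Sum.elim b d = a ⬝ᵥ b + c ⬝ᵥ d := by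
    intro a b c d
    simp [dotProduct, Fintype.sum_sum_type]
  constructor
  · rintro ⟨q, hq⟩ j
    obtain ⟨i, hij⟩ := hS j
    obtain ⟨hker, hdet⟩ := hq i
    rw [rank_append_col_gt_iff, notMem_span_cols_iff]
    refine ⟨q i ∘ Sum.inl, ?_, ?_⟩
    · rw [Matrix.vecMul_fromBlocks] at hker
      have := congrFun hker
      funext d
      have h2 := this (Sum.inr d)
      simpa using h2
    · intro h0
      apply hdet j hij
      have : q i = Sum.elim (q i ∘ Sum.inl) (q i ∘ Sum.inr) := by
        funext x; cases x <;> rfl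
      rw [this, hdot]
      simp [h0]
  · intro h
    have hchoice : ∀ i : Fin n_b, ∃ w : Fin p → RatFunc ℝ,
        w ᵥ* G_d = 0 ∧ ∀ j : Fin m_f, S i j = true → w ⬝ᵥ (fun r => G_f r j) ≠ 0 := by
      intro i
      have := exists_common_nonvanishing (K := RatFunc ℝ)
        (LinearMap.ker G_d.vecMulLinear) (ι := {j : Fin m_f // S i j = true})
        (fun j => dotL (fun r => G_f r j.1)) ?_
      · obtain ⟨w, hwW, hw⟩ := this
        refine ⟨w, by simpa [LinearMap.mem_ker] using hwW, fun j hj => ?_⟩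
        have := hw ⟨j, hj⟩
        simpa [dotProduct_comm] using this
      · rintro ⟨j, hj⟩
        have hj2 := h j
        rw [rank_append_col_gt_iff, notMem_span_cols_iff] at hj2
        obtain ⟨w, hw1, hw2⟩ := hj2
        exact ⟨w, by simpa [LinearMap.mem_ker] using hw1,
          by simpa [dotProduct_comm] using hw2⟩
    choose w hw1 hw2 using hchoice
    refine ⟨fun i => Sum.elim (w i) (-(w i ᵥ* G_u)), fun i => ?_⟩
    constructor
    · rw [Matrix.vecMul_fromBlocks]
      funext x
      cases x with
      | inl a => simp [Matrix.neg_vecMul]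
      | inr b => simp [hw1 i]
    · intro j hj
      rw [hdot]
      simpa using hw2 i j hj
end

section
/- Let K be a field, G_d : Matrix (Fin p) (Fin m_d) K and G_f : Matrix (Fin p) (Fin m_f) K. Then rank [G_d G_f] = rank G_d + m_f (strong isolability) if and only if there exists Q : Matrix (Fin m_f) (Fin p) K with Q * G_d = 0 and Q * G_f = 1 (the identity matrix I_{m_f}). (Strong isolability is equivalent to the existence of a rational filter that exactly inverts the fault channel while decoupling the disturbances — the algebraic part of the exact fault estimation problem with reference model M_r = I.) -/
open Matrix

lemma range_fromColumns_mulVecLin {K : Type*} [Field K] {p m_d m_f : ℕ}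
    (G_d : Matrix (Fin p) (Fin m_d) K) (G_f : Matrix (Fin p) (Fin m_f) K) :
    LinearMap.range (Matrix.fromCols G_d G_f).mulVecLin =
      LinearMap.range G_d.mulVecLin ⊔ LinearMap.range G_f.mulVecLin := by
  apply le_antisymm
  · rintro v ⟨x, rfl⟩
    have hx : Sum.elim (x ∘ Sum.inl) (x ∘ Sum.inr) = x := by
      funext i; cases i <;> rfl
    have this : Matrix.fromCols G_d G_f *ᵥ x
        = G_d *ᵥ (x ∘ Sum.inl) + G_f *ᵥ (x ∘ Sum.inr) :=
      (congrArg (fun v => Matrix.fromCols G_d G_f *ᵥ v) hx.symm).trans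
        (Matrix.fromCols_mulVec_sumElim G_d G_f _ _)
    rw [Matrix.mulVecLin_apply, this]
    exact Submodule.add_mem _ (le_sup_left (α := Submodule K (Fin p → K))
        ⟨x ∘ Sum.inl, rfl⟩)
      (le_sup_right (α := Submodule K (Fin p → K)) ⟨x ∘ Sum.inr, rfl⟩)
  · apply sup_le
    · rintro v ⟨x, rfl⟩
      exact ⟨Sum.elim x 0, by simp [Matrix.fromCols_mulVec_sumElim]⟩
    · rintro v ⟨x, rfl⟩
      exact ⟨Sum.elim 0 x, by simp [Matrix.fromCols_mulVec_sumElim]⟩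

/-- Strong isolability is equivalent to the existence of a filter that exactly inverts the
fault channel while decoupling the disturbances (exact fault estimation with `M_r = I`). -/
theorem strong_isolability_iff_exact_fault_estimation
    (K : Type*) [Field K] (p m_d m_f : ℕ)
    (G_d : Matrix (Fin p) (Fin m_d) K)
    (G_f : Matrix (Fin p) (Fin m_f) K) :
    (Matrix.fromCols G_d G_f).rank = G_d.rank + m_f ↔
    ∃ Q : Matrix (Fin m_f) (Fin p) K,
      Q * G_d = 0 ∧ Q * G_f = (1 : Matrix (Fin m_f) (Fin m_f) K) := by
  classical
  set f := G_d.mulVecLin with hf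
  set g := G_f.mulVecLin with hg
  set U := LinearMap.range f with hU
  set W := LinearMap.range g with hW
  have hrankC : (Matrix.fromCols G_d G_f).rank = Module.finrank K ↥(U ⊔ W) := by
    rw [Matrix.rank, range_fromColumns_mulVecLin]
  have hrankD : G_d.rank = Module.finrank K ↥U := rfl
  have hdomg : Module.finrank K (Fin m_f → K) = m_f := by
    simp [Module.finrank_pi]
  have hsupinf : Module.finrank K ↥(U ⊔ W) + Module.finrank K ↥(U ⊓ W)
      = Module.finrank K ↥U + Module.finrank K ↥W :=
    Submodule.finrank_sup_add_finrank_inf_eq U W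
  have hrn : Module.finrank K ↥W + Module.finrank K ↥(LinearMap.ker g) = m_f := by
    have h := LinearMap.finrank_range_add_finrank_ker g
    rwa [hdomg] at h
  constructor
  · intro h
    rw [hrankC, hrankD] at h
    -- deduce finrank (U ⊓ W) = 0 and finrank W = m_f
    have hWle : Module.finrank K ↥W ≤ m_f := by omega
    have hiw : Module.finrank K ↥(U ⊓ W) = 0 ∧ Module.finrank K ↥W = m_f := by
      constructor <;> omega
    have hinf : U ⊓ W = ⊥ := Submodule.finrank_eq_zero.mp hiw.1
    have hker : LinearMap.ker g = ⊥ := by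
      apply Submodule.finrank_eq_zero.mp
      omega
    -- build the filter
    set T := U.mkQ with hT
    have hinj : LinearMap.ker (T ∘ₗ g) = ⊥ := by
      rw [LinearMap.ker_eq_bot']
      intro x hx
      have hgx : g x ∈ U := by
        have : g x ∈ LinearMap.ker T := hx
        rwa [hT, Submodule.ker_mkQ] at this
      have : g x ∈ U ⊓ W := ⟨hgx, ⟨x, rfl⟩⟩
      rw [hinf] at this
      have : x ∈ LinearMap.ker g := this
      rwa [hker, Submodule.mem_bot] at this
    obtain ⟨r, hr⟩ := (T ∘ₗ g).exists_leftInverse_of_injective hinj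
    set q : (Fin p → K) →ₗ[K] (Fin m_f → K) := r ∘ₗ T with hq
    refine ⟨LinearMap.toMatrix' q, ?_, ?_⟩
    · apply Matrix.toLin'.injective
      show Matrix.mulVecLin _ = Matrix.mulVecLin 0
      rw [Matrix.mulVecLin_mul, Matrix.mulVecLin_zero]
      show Matrix.mulVecLin (LinearMap.toMatrix' q) ∘ₗ f = 0
      rw [show Matrix.mulVecLin (LinearMap.toMatrix' q) = q from
        Matrix.toLin'_toMatrix' q]
      refine LinearMap.ext fun x => ?_
      have hfx : T (f x) = 0 := (Submodule.Quotient.mk_eq_zero U).mpr ⟨x, rfl⟩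
      show q (f x) = 0
      rw [hq]
      show r (T (f x)) = 0
      rw [hfx, map_zero]
    · apply Matrix.toLin'.injective
      show Matrix.mulVecLin _ = Matrix.mulVecLin 1
      rw [Matrix.mulVecLin_mul, Matrix.mulVecLin_one]
      show Matrix.mulVecLin (LinearMap.toMatrix' q) ∘ₗ g = LinearMap.id
      rw [show Matrix.mulVecLin (LinearMap.toMatrix' q) = q from
        Matrix.toLin'_toMatrix' q, hq, LinearMap.comp_assoc, hr]
  · rintro ⟨Q, hQd, hQf⟩
    have hQd' : Q.mulVecLin ∘ₗ f = 0 := by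
      rw [hf, ← Matrix.mulVecLin_mul, hQd, Matrix.mulVecLin_zero]
    have hQf' : Q.mulVecLin ∘ₗ g = LinearMap.id := by
      rw [hg, ← Matrix.mulVecLin_mul, hQf, Matrix.mulVecLin_one]
    have hker : LinearMap.ker g = ⊥ := by
      rw [LinearMap.ker_eq_bot']
      intro x hx
      have := congrArg (fun φ => φ x) hQf'
      simp only [LinearMap.comp_apply, LinearMap.id_apply] at this
      rw [hx, map_zero] at this
      exact this.symm
    have hinf : U ⊓ W = ⊥ := by
      rw [eq_bot_iff]
      rintro v ⟨⟨y, hy⟩, ⟨x, hx⟩⟩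
      have h1 : Q.mulVecLin v = 0 := by
        rw [← hy]
        have := LinearMap.congr_fun hQd' y
        simpa using this
      have h2 : Q.mulVecLin v = x := by
        rw [← hx]
        have := LinearMap.congr_fun hQf' x
        simpa using this
      have hx0 : x = 0 := by rw [← h2, h1]
      rw [Submodule.mem_bot, ← hx, hx0, map_zero]
    have hWrank : Module.finrank K ↥W = m_f := by
      rw [hker] at hrn
      simpa using hrn
    rw [hrankC, hrankD]
    have : Module.finrank K ↥(U ⊓ W) = 0 := by
      rw [hinf]; simp
    omega
end
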